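/- The linear and quadratic Toda brackets π₁ and π₂ are compatible: π₁ + π₂ also satisfies the Jacobi identity (equivalently, the Schouten bracket [π₁,π₂] vanishes). -/

import Mathlib

set_option maxHeartbeats 4000000
set_option linter.unusedSectionVars false
set_option linter.unusedVariables false


/-- Partial derivative of a function on `ι → ℝ` in the `i`-th coordinate direction. -/
noncomputable def pd {ι : Type*} [Fintype ι] [DecidableEq ι]
    (i : ι) (f : (ι → ℝ) → ℝ) (x : ι → ℝ) : ℝ :=
  fderiv ℝ f x (Pi.single i 1)

/-- Jacobi identity for a bracket given by a coefficient matrix `π`. -/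
def JacobiId {ι : Type*} [Fintype ι] [DecidableEq ι]
    (π : ι → ι → (ι → ℝ) → ℝ) : Prop :=
  ∀ (i j k : ι) (x : ι → ℝ),
    (∑ l, (π l i x * pd l (π j k) x + π l j x * pd l (π k i) x
        + π l k x * pd l (π i j) x)) = 0

/-- The linear Toda bracket π₁ on ℝ^{2N-1}; here `M = N - 1`, the `a`-coordinates
are indexed by `Fin M` (`Sum.inl`) and the `b`-coordinates by `Fin (M+1)` (`Sum.inr`).
Nonzero coordinate brackets: {a_i, b_i} = -a_i, {a_i, b_{i+1}} = a_i. -/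
noncomputable def pi1 (M : ℕ) :
    (Fin M ⊕ Fin (M+1)) → (Fin M ⊕ Fin (M+1)) → ((Fin M ⊕ Fin (M+1)) → ℝ) → ℝ
  | .inl i, .inr j => fun x =>
      if j = i.castSucc then -(x (.inl i)) else if j = i.succ then x (.inl i) else 0
  | .inr j, .inl i => fun x =>
      if j = i.castSucc then x (.inl i) else if j = i.succ then -(x (.inl i)) else 0
  | .inl _, .inl _ => fun _ => 0
  | .inr _, .inr _ => fun _ => 0

/-- The quadratic Toda bracket π₂ on ℝ^{2N-1} (`M = N - 1`).
Nonzero coordinate brackets: {a_i, a_{i+1}} = (1/2) a_i a_{i+1},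
{a_i, b_i} = -a_i b_i, {a_i, b_{i+1}} = a_i b_{i+1}, {b_i, b_{i+1}} = 2 a_i². -/
noncomputable def pi2 (M : ℕ) :
    (Fin M ⊕ Fin (M+1)) → (Fin M ⊕ Fin (M+1)) → ((Fin M ⊕ Fin (M+1)) → ℝ) → ℝ
  | .inl i, .inl j => fun x =>
      if (i : ℕ) + 1 = (j : ℕ) then (1/2) * x (.inl i) * x (.inl j)
      else if (j : ℕ) + 1 = (i : ℕ) then -((1/2) * x (.inl j) * x (.inl i))
      else 0
  | .inl i, .inr j => fun x =>
      if j = i.castSucc then -(x (.inl i) * x (.inr j))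
      else if j = i.succ then x (.inl i) * x (.inr j) else 0
  | .inr j, .inl i => fun x =>
      if j = i.castSucc then x (.inl i) * x (.inr j)
      else if j = i.succ then -(x (.inl i) * x (.inr j)) else 0
  | .inr i, .inr j => fun x =>
      if h : (i : ℕ) + 1 = (j : ℕ) then
        2 * (x (.inl ⟨(i : ℕ), by have := j.isLt; omega⟩))^2
      else if h : (j : ℕ) + 1 = (i : ℕ) then
        -(2 * (x (.inl ⟨(j : ℕ), by have := i.isLt; omega⟩))^2)
      else 0

section toolkit
variable {ι : Type*} [Fintype ι] [DecidableEq ι]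

def del (m l : ι) : ℝ := if m = l then 1 else 0

noncomputable def prj (m : ι) : (ι → ℝ) →L[ℝ] ℝ :=
  ContinuousLinearMap.proj (R := ℝ) (φ := fun _ : ι => ℝ) m

lemma pd_eq {f : (ι → ℝ) → ℝ} {f' : (ι → ℝ) →L[ℝ] ℝ} {x : ι → ℝ}
    (h : HasFDerivAt f f' x) (l : ι) : pd l f x = f' (Pi.single l 1) := by
  rw [pd, h.fderiv]

lemma hasF_coord (m : ι) (x : ι → ℝ) :
    HasFDerivAt (fun y : ι → ℝ => y m) (prj m) x :=
  (prj m).hasFDerivAt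

lemma prj_single (m l : ι) : prj m (Pi.single l 1) = del m l := by
  simp [prj, Pi.single_apply, del]

lemma pd_zero (l : ι) (x : ι → ℝ) : pd l (fun _ => (0:ℝ)) x = 0 := by
  rw [pd_eq (hasFDerivAt_const (0:ℝ) x)]; simp

lemma pd_S1 (m n l : ι) (x : ι → ℝ) :
    pd l (fun y => 1/2 * y m * y n) x = 1/2 * (del m l * x n + x m * del n l) := by
  rw [pd_eq (f := fun y => 1/2 * y m * y n) (((hasF_coord m x).const_mul (1/2 : ℝ)).mul (hasF_coord n x))]
  simp [prj_single, smul_eq_mul]; ring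

lemma pd_S2 (m n l : ι) (x : ι → ℝ) :
    pd l (fun y => -(1/2 * y m * y n)) x = -(1/2 * (del m l * x n + x m * del n l)) := by
  rw [pd_eq (f := fun y => -(1/2 * y m * y n)) (((hasF_coord m x).const_mul (1/2 : ℝ)).mul (hasF_coord n x)).neg]
  simp [prj_single, smul_eq_mul]; ring

lemma pd_S3 (m n l : ι) (x : ι → ℝ) :
    pd l (fun y => -(y m) + -(y m * y n)) x
      = -(del m l) + -(del m l * x n + x m * del n l) := by
  rw [pd_eq (f := fun y => -(y m) + -(y m * y n)) (((hasF_coord m x).neg).add ((hasF_coord m x).mul (hasF_coord n x)).neg)]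
  simp [prj_single, smul_eq_mul]; ring

lemma pd_S4 (m n l : ι) (x : ι → ℝ) :
    pd l (fun y => y m + y m * y n) x
      = del m l + (del m l * x n + x m * del n l) := by
  rw [pd_eq (f := fun y => y m + y m * y n) ((hasF_coord m x).add ((hasF_coord m x).mul (hasF_coord n x)))]
  simp [prj_single, smul_eq_mul]; ring

lemma pd_S5 (m l : ι) (x : ι → ℝ) :
    pd l (fun y => 2 * (y m)^2) x = 4 * x m * del m l := by
  simp only [pow_two]
  rw [pd_eq (f := fun y => 2 * (y m * y m)) (((hasF_coord m x).mul (hasF_coord m x)).const_mul (2:ℝ))]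
  simp [prj_single, smul_eq_mul]; ring

lemma pd_S6 (m l : ι) (x : ι → ℝ) :
    pd l (fun y => -(2 * (y m)^2)) x = -(4 * x m * del m l) := by
  simp only [pow_two]
  rw [pd_eq (f := fun y => -(2 * (y m * y m))) ((((hasF_coord m x).mul (hasF_coord m x)).const_mul (2:ℝ)).neg)]
  simp [prj_single, smul_eq_mul]; ring

lemma sum_del (F : ι → ℝ) (m : ι) : (∑ l, F l * del m l) = F m := by
  simp [del, mul_ite, Finset.sum_ite_eq]

lemma sum_key (F : ι → ℝ) (a b : ι) (c d : ℝ) :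
    (∑ l, (c * del a l + d * del b l) * F l) = c * F a + d * F b := by
  have h : ∀ l ∈ (Finset.univ : Finset ι),
      (c * del a l + d * del b l) * F l
        = (fun l => c * F l) l * del a l + (fun l => d * F l) l * del b l := by
    intro l _; ring
  rw [Finset.sum_congr rfl h, Finset.sum_add_distrib, sum_del, sum_del]

lemma sum_key1 (F : ι → ℝ) (a : ι) (c : ℝ) :
    (∑ l, (c * del a l) * F l) = c * F a := by
  have h : ∀ l ∈ (Finset.univ : Finset ι),
      (c * del a l) * F l = (fun l => c * F l) l * del a l := by
    intro l _; ring
  rw [Finset.sum_congr rfl h, sum_del]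

end toolkit

noncomputable def piS (M : ℕ) := fun i j x => pi1 M i j x + pi2 M i j x

lemma piS_def (M : ℕ) (i j : Fin M ⊕ Fin (M+1)) :
    piS M i j = fun x => pi1 M i j x + pi2 M i j x := rfl

section master
variable {M : ℕ}
local notation "ι" => (Fin M ⊕ Fin (M+1))

lemma pd_piS_ll (i j : Fin M) (l : ι) (x : ι → ℝ) :
    pd l (piS M (.inl i) (.inl j)) x =
      if (i:ℕ)+1 = (j:ℕ) then
        1/2 * (del (.inl i : ι) l * x (.inl j) + x (.inl i) * del (.inl j : ι) l)
      else if (j:ℕ)+1 = (i:ℕ) then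
        -(1/2 * (del (.inl j : ι) l * x (.inl i) + x (.inl j) * del (.inl i : ι) l))
      else 0 := by
  by_cases h1 : (i:ℕ)+1 = (j:ℕ)
  · simp only [piS_def, pi1, pi2, if_pos h1, zero_add, pd_S1]
  · by_cases h2 : (j:ℕ)+1 = (i:ℕ)
    · simp only [piS_def, pi1, pi2, if_neg h1, if_pos h2, zero_add, pd_S2]
    · simp only [piS_def, pi1, pi2, if_neg h1, if_neg h2, zero_add, pd_zero]

lemma pd_piS_lr (i : Fin M) (j : Fin (M+1)) (l : ι) (x : ι → ℝ) :
    pd l (piS M (.inl i) (.inr j)) x =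
      if j = i.castSucc then
        -(del (.inl i : ι) l) + -(del (.inl i : ι) l * x (.inr j) + x (.inl i) * del (.inr j : ι) l)
      else if j = i.succ then
        del (.inl i : ι) l + (del (.inl i : ι) l * x (.inr j) + x (.inl i) * del (.inr j : ι) l)
      else 0 := by
  by_cases h1 : j = i.castSucc
  · simp only [piS_def, pi1, pi2, if_pos h1, pd_S3]
  · by_cases h2 : j = i.succ
    · simp only [piS_def, pi1, pi2, if_neg h1, if_pos h2, pd_S4]
    · simp only [piS_def, pi1, pi2, if_neg h1, if_neg h2, add_zero, pd_zero]

lemma pd_piS_rl (j : Fin (M+1)) (i : Fin M) (l : ι) (x : ι → ℝ) :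
    pd l (piS M (.inr j) (.inl i)) x =
      if j = i.castSucc then
        del (.inl i : ι) l + (del (.inl i : ι) l * x (.inr j) + x (.inl i) * del (.inr j : ι) l)
      else if j = i.succ then
        -(del (.inl i : ι) l) + -(del (.inl i : ι) l * x (.inr j) + x (.inl i) * del (.inr j : ι) l)
      else 0 := by
  by_cases h1 : j = i.castSucc
  · simp only [piS_def, pi1, pi2, if_pos h1, pd_S4]
  · by_cases h2 : j = i.succ
    · simp only [piS_def, pi1, pi2, if_neg h1, if_pos h2, pd_S3]
    · simp only [piS_def, pi1, pi2, if_neg h1, if_neg h2, add_zero, pd_zero]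

lemma pd_piS_rr (i j : Fin (M+1)) (l : ι) (x : ι → ℝ) :
    pd l (piS M (.inr i) (.inr j)) x =
      if h : (i:ℕ)+1 = (j:ℕ) then
        4 * x (.inl ⟨(i:ℕ), by omega⟩) * del (.inl ⟨(i:ℕ), by omega⟩ : ι) l
      else if h : (j:ℕ)+1 = (i:ℕ) then
        -(4 * x (.inl ⟨(j:ℕ), by omega⟩) * del (.inl ⟨(j:ℕ), by omega⟩ : ι) l)
      else 0 := by
  by_cases h1 : (i:ℕ)+1 = (j:ℕ)
  · simp only [piS_def, pi1, pi2, dif_pos h1, zero_add, pd_S5]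
  · by_cases h2 : (j:ℕ)+1 = (i:ℕ)
    · simp only [piS_def, pi1, pi2, dif_neg h1, dif_pos h2, zero_add, pd_S6]
    · simp only [piS_def, pi1, pi2, dif_neg h1, dif_neg h2, zero_add, pd_zero]

end master

section Tsec
variable {M : ℕ}
local notation "ι" => (Fin M ⊕ Fin (M+1))

lemma T_ll (I : ι) (j k : Fin M) (x : ι → ℝ) :
    (∑ l, piS M l I x * pd l (piS M (.inl j) (.inl k)) x) =
      if (j:ℕ)+1 = (k:ℕ) then
        1/2 * x (.inl k) * piS M (.inl j) I x + 1/2 * x (.inl j) * piS M (.inl k) I x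
      else if (k:ℕ)+1 = (j:ℕ) then
        -(1/2 * x (.inl j) * piS M (.inl k) I x + 1/2 * x (.inl k) * piS M (.inl j) I x)
      else 0 := by
  by_cases h1 : (j:ℕ)+1 = (k:ℕ)
  · simp only [pd_piS_ll, if_pos h1]
    trans (∑ l, ((1/2 * x (Sum.inl k)) * del (Sum.inl j : ι) l
        + (1/2 * x (Sum.inl j)) * del (Sum.inl k : ι) l) * (piS M l I x))
    · exact Finset.sum_congr rfl fun l _ => by ring
    · rw [sum_key]
  · by_cases h2 : (k:ℕ)+1 = (j:ℕ)
    · simp only [pd_piS_ll, if_neg h1, if_pos h2]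
      trans (∑ l, ((-(1/2 * x (Sum.inl j))) * del (Sum.inl k : ι) l
          + (-(1/2 * x (Sum.inl k))) * del (Sum.inl j : ι) l) * (piS M l I x))
      · exact Finset.sum_congr rfl fun l _ => by ring
      · rw [sum_key]; ring
    · simp only [pd_piS_ll, if_neg h1, if_neg h2, mul_zero, Finset.sum_const_zero]

lemma T_lr (I : ι) (j : Fin M) (k : Fin (M+1)) (x : ι → ℝ) :
    (∑ l, piS M l I x * pd l (piS M (.inl j) (.inr k)) x) =
      if k = j.castSucc then
        -(piS M (.inl j) I x)
          + -(piS M (.inl j) I x * x (.inr k) + x (.inl j) * piS M (.inr k) I x)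
      else if k = j.succ then
        piS M (.inl j) I x
          + (piS M (.inl j) I x * x (.inr k) + x (.inl j) * piS M (.inr k) I x)
      else 0 := by
  by_cases h1 : k = j.castSucc
  · simp only [pd_piS_lr, if_pos h1]
    trans (∑ l, ((-1 - x (Sum.inr k)) * del (Sum.inl j : ι) l
        + (-(x (Sum.inl j))) * del (Sum.inr k : ι) l) * (piS M l I x))
    · exact Finset.sum_congr rfl fun l _ => by ring
    · rw [sum_key]; ring
  · by_cases h2 : k = j.succ
    · simp only [pd_piS_lr, if_neg h1, if_pos h2]
      trans (∑ l, ((1 + x (Sum.inr k)) * del (Sum.inl j : ι) l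
          + (x (Sum.inl j)) * del (Sum.inr k : ι) l) * (piS M l I x))
      · exact Finset.sum_congr rfl fun l _ => by ring
      · rw [sum_key]; ring
    · simp only [pd_piS_lr, if_neg h1, if_neg h2, mul_zero, Finset.sum_const_zero]

lemma T_rl (I : ι) (k : Fin (M+1)) (j : Fin M) (x : ι → ℝ) :
    (∑ l, piS M l I x * pd l (piS M (.inr k) (.inl j)) x) =
      if k = j.castSucc then
        piS M (.inl j) I x
          + (piS M (.inl j) I x * x (.inr k) + x (.inl j) * piS M (.inr k) I x)
      else if k = j.succ then
        -(piS M (.inl j) I x)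
          + -(piS M (.inl j) I x * x (.inr k) + x (.inl j) * piS M (.inr k) I x)
      else 0 := by
  by_cases h1 : k = j.castSucc
  · simp only [pd_piS_rl, if_pos h1]
    trans (∑ l, ((1 + x (Sum.inr k)) * del (Sum.inl j : ι) l
        + (x (Sum.inl j)) * del (Sum.inr k : ι) l) * (piS M l I x))
    · exact Finset.sum_congr rfl fun l _ => by ring
    · rw [sum_key]; ring
  · by_cases h2 : k = j.succ
    · simp only [pd_piS_rl, if_neg h1, if_pos h2]
      trans (∑ l, ((-1 - x (Sum.inr k)) * del (Sum.inl j : ι) l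
          + (-(x (Sum.inl j))) * del (Sum.inr k : ι) l) * (piS M l I x))
      · exact Finset.sum_congr rfl fun l _ => by ring
      · rw [sum_key]; ring
    · simp only [pd_piS_rl, if_neg h1, if_neg h2, mul_zero, Finset.sum_const_zero]

lemma T_rr (I : ι) (j k : Fin (M+1)) (x : ι → ℝ) :
    (∑ l, piS M l I x * pd l (piS M (.inr j) (.inr k)) x) =
      if h : (j:ℕ)+1 = (k:ℕ) then
        4 * x (.inl ⟨(j:ℕ), by omega⟩) * piS M (.inl ⟨(j:ℕ), by omega⟩) I x
      else if h : (k:ℕ)+1 = (j:ℕ) then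
        -(4 * x (.inl ⟨(k:ℕ), by omega⟩) * piS M (.inl ⟨(k:ℕ), by omega⟩) I x)
      else 0 := by
  by_cases h1 : (j:ℕ)+1 = (k:ℕ)
  · simp only [pd_piS_rr, dif_pos h1]
    trans (∑ l, ((4 * x (Sum.inl ⟨(j:ℕ), by omega⟩))
        * del (Sum.inl ⟨(j:ℕ), by omega⟩ : ι) l) * (piS M l I x))
    · exact Finset.sum_congr rfl fun l _ => by ring
    · rw [sum_key1]
  · by_cases h2 : (k:ℕ)+1 = (j:ℕ)
    · simp only [pd_piS_rr, dif_neg h1, dif_pos h2]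
      trans (∑ l, ((-(4 * x (Sum.inl ⟨(k:ℕ), by omega⟩)))
          * del (Sum.inl ⟨(k:ℕ), by omega⟩ : ι) l) * (piS M l I x))
      · exact Finset.sum_congr rfl fun l _ => by ring
      · rw [sum_key1]; ring
    · simp only [pd_piS_rr, dif_neg h1, dif_neg h2, mul_zero, Finset.sum_const_zero]

end Tsec

lemma piS_app (M : ℕ) (i j : Fin M ⊕ Fin (M+1)) (x) :
    piS M i j x = pi1 M i j x + pi2 M i j x := rfl

/-- The linear and quadratic Toda brackets are compatible: their sum
also satisfies the Jacobi identity. -/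
theorem pi1_pi2_compatible (M : ℕ) :
    JacobiId (fun i j x => pi1 M i j x + pi2 M i j x) := by
  intro i j k x
  show (∑ l, (piS M l i x * pd l (piS M j k) x + piS M l j x * pd l (piS M k i) x
      + piS M l k x * pd l (piS M i j) x)) = 0
  rw [Finset.sum_add_distrib, Finset.sum_add_distrib]
  obtain ⟨A, ha⟩ : ∃ A : ℕ → ℝ, ∀ m : Fin M, x (.inl m) = A ↑m :=
    ⟨fun n => if h : n < M then x (.inl ⟨n, h⟩) else 0, fun m => by simp⟩
  obtain ⟨B, hb⟩ : ∃ B : ℕ → ℝ, ∀ m : Fin (M+1), x (.inr m) = B ↑m :=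
    ⟨fun n => if h : n < M+1 then x (.inr ⟨n, h⟩) else 0, fun m => by
      have := m.isLt; simp; intro h; exfalso; omega⟩
  rcases i with i | i <;> rcases j with j | j <;> rcases k with k | k
  · rw [T_ll, T_ll, T_ll]
    simp only [piS_app, pi1, pi2, ha, hb, Fin.ext_iff, Fin.coe_castSucc, Fin.val_succ]
    split_ifs <;> (try ring) <;> (exfalso; omega)
  · rw [T_lr, T_rl, T_ll]
    simp only [piS_app, pi1, pi2, ha, hb, Fin.ext_iff, Fin.coe_castSucc, Fin.val_succ]
    split_ifs <;> (try ring) <;> (exfalso; omega)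
  · rw [T_rl, T_ll, T_lr]
    simp only [piS_app, pi1, pi2, ha, hb, Fin.ext_iff, Fin.coe_castSucc, Fin.val_succ]
    split_ifs <;> (try ring) <;> (exfalso; omega)
  · rw [T_rr, T_rl, T_lr]
    simp only [piS_app, pi1, pi2, ha, hb, Fin.ext_iff, Fin.coe_castSucc, Fin.val_succ]
    split_ifs <;> (try ring) <;> (exfalso; omega)
  · rw [T_ll, T_lr, T_rl]
    simp only [piS_app, pi1, pi2, ha, hb, Fin.ext_iff, Fin.coe_castSucc, Fin.val_succ]
    split_ifs <;> (try ring) <;> (exfalso; omega)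
  · rw [T_lr, T_rr, T_rl]
    simp only [piS_app, pi1, pi2, ha, hb, Fin.ext_iff, Fin.coe_castSucc, Fin.val_succ]
    split_ifs <;> (try ring) <;> (exfalso; omega)
  · rw [T_rl, T_lr, T_rr]
    simp only [piS_app, pi1, pi2, ha, hb, Fin.ext_iff, Fin.coe_castSucc, Fin.val_succ]
    split_ifs <;> (try ring) <;> (exfalso; omega)
  · rw [T_rr, T_rr, T_rr]
    simp only [piS_app, pi1, pi2, ha, hb, Fin.ext_iff, Fin.coe_castSucc, Fin.val_succ]
    split_ifs <;> (try ring) <;> first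
      | (exfalso; omega)
      | (have e : i = j := Fin.ext (by omega); subst e; ring)
      | (have e : i = k := Fin.ext (by omega); subst e; ring)
      | (have e : j = k := Fin.ext (by omega); subst e; ring)
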